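/- The map φ sending an n×n (0,1)-matrix π to its rotation by 180° (i.e., φ(π)_{i,j} = π_{n+1-i,n+1-j}) is a bijection from P(n,k) to itself satisfying wex(φ(π)) = n - k - exc(π). -/

import Mathlib

namespace PP

def isPP {n : ℕ} (M : Fin n → Fin n → Bool) : Prop :=
  (∀ i j j', M i j = true → M i j' = true → j = j') ∧
  (∀ i i' j, M i j = true → M i' j = true → i = i')

def zeroRows {n : ℕ} (M : Fin n → Fin n → Bool) : ℕ :=
  (Finset.univ.filter (fun i : Fin n => ∀ j, M i j = false)).card

def invStat {n : ℕ} (M : Fin n → Fin n → Bool) : ℕ :=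
  (Finset.univ.filter (fun p : Fin n × Fin n =>
    M p.1 p.2 = false ∧ (∀ j' < p.2, M p.1 j' = false) ∧ (∀ i' < p.1, M i' p.2 = false) ∧
    ((∃ j', M p.1 j' = true) ∨ (∃ i', M i' p.2 = true)))).card

def rlminStat {n : ℕ} (M : Fin n → Fin n → Bool) : ℕ :=
  (Finset.univ.filter (fun p : Fin n × Fin n =>
    M p.1 p.2 = true ∧ ∀ l < p.2, ∃ i' < p.1, M i' l = true)).card

def excStat {n : ℕ} (M : Fin n → Fin n → Bool) : ℕ :=
  (Finset.univ.filter (fun p : Fin n × Fin n => M p.1 p.2 = true ∧ p.1 < p.2)).card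

def wexStat {n : ℕ} (M : Fin n → Fin n → Bool) : ℕ :=
  (Finset.univ.filter (fun p : Fin n × Fin n => M p.1 p.2 = true ∧ p.1 ≤ p.2)).card

def reachN {n : ℕ} (M : Fin n → Fin n → Bool) : ℕ → Fin n → Fin n → Prop
  | 0, i, j => i = j
  | m+1, i, j => ∃ l, M i l = true ∧ reachN M m l j

noncomputable def cycStat {n : ℕ} (M : Fin n → Fin n → Bool) : ℕ :=
  Nat.card {i : Fin n // (∃ m, 0 < m ∧ reachN M m i i) ∧ ∀ j, (∃ m, reachN M m i j) → j ≤ i}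

def fixStat {n : ℕ} (M : Fin n → Fin n → Bool) : ℕ :=
  (Finset.univ.filter (fun i : Fin n => M i i = true)).card

noncomputable def cycGe2Stat {n : ℕ} (M : Fin n → Fin n → Bool) : ℕ :=
  Nat.card {i : Fin n // (∃ m, 0 < m ∧ reachN M m i i) ∧ (∀ j, (∃ m, reachN M m i j) → j ≤ i) ∧ M i i = false}

def Conn {n : ℕ} (M : Fin n → Fin n → Bool) : Prop :=
  ∀ i : ℕ, 0 < i → i < n → ∃ r : Fin n, r.1 < i ∧ ∀ c : Fin n, c.1 < i → M r c = false

def UpDownFrom {n : ℕ} (M : Fin n → Fin n → Bool) (i : Fin n) : Prop :=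
  ∀ (m : ℕ) (a b : Fin n),
    (∀ m', 1 ≤ m' → m' ≤ m + 1 → ¬ reachN M m' i i) →
    reachN M m i a → M a b = true →
    ((Even m → a < b) ∧ (¬ Even m → b < a))

def CUD {n : ℕ} (M : Fin n → Fin n → Bool) : Prop :=
  (∀ i : Fin n,
      ((∃ m, 0 < m ∧ reachN M m i i) ∧ ∀ j, (∃ m, reachN M m i j) → i ≤ j) →
      UpDownFrom M i) ∧
  (∀ i : Fin n, (∀ i', M i' i = false) → UpDownFrom M i)

def desStat {n : ℕ} (M : Fin n → Fin n → Bool) : ℕ :=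
  (Finset.univ.filter (fun p : Fin n × Fin n =>
      M p.1 p.2 = true ∧ ∃ h : p.1.1 + 1 < n, ∃ b : Fin n, M ⟨p.1.1 + 1, h⟩ b = true ∧ b < p.2)).card
  + (Finset.univ.filter (fun p : Fin n =>
      (∀ j, M p j = false) ∧ ∃ _h : 0 < p.1, ∃ a j : Fin n,
        M ⟨p.1 - 1, Nat.lt_of_le_of_lt (Nat.sub_le _ _) p.isLt⟩ a = true ∧
        (∀ i, M i j = false) ∧
        (Finset.univ.filter (fun m : Fin n => (∀ i, M i m = false) ∧ m < j)).card
          = (Finset.univ.filter (fun r : Fin n => (∀ c, M r c = false) ∧ r < p)).card ∧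
        j < a)).card

def gbinom {R : Type*} [CommRing R] (q : R) : ℕ → ℕ → R
  | _, 0 => 1
  | 0, _+1 => 0
  | n+1, k+1 => gbinom q n k + q ^ (k+1) * gbinom q n (k+1)

end PP


def rot {n : ℕ} (M : Fin n → Fin n → Bool) : Fin n → Fin n → Bool :=
  fun i j => M i.rev j.rev


lemma rot_rot {n : ℕ} (M : Fin n → Fin n → Bool) : rot (rot M) = M := by
  funext i j; simp [rot, Fin.rev_rev]

lemma isPP_rot {n : ℕ} {M : Fin n → Fin n → Bool} (h : PP.isPP M) : PP.isPP (rot M) := by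
  obtain ⟨h1, h2⟩ := h
  refine ⟨fun i j j' a b => Fin.rev_inj.mp (h1 _ _ _ a b),
         fun i i' j a b => Fin.rev_inj.mp (h2 _ _ _ a b)⟩

lemma zeroRows_rot {n : ℕ} (M : Fin n → Fin n → Bool) :
    PP.zeroRows (rot M) = PP.zeroRows M := by
  unfold PP.zeroRows
  apply Finset.card_nbij' (i := Fin.rev) (j := Fin.rev)
  · intro a ha
    simp only [Finset.mem_coe, Finset.mem_filter] at ha ⊢
    simp only [Finset.mem_coe, Finset.mem_filter, Finset.mem_univ, true_and, rot] at ha ⊢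
    intro j
    have := ha j.rev
    rwa [Fin.rev_rev] at this
  · intro a ha
    simp only [Finset.mem_coe, Finset.mem_filter] at ha ⊢
    simp only [Finset.mem_coe, Finset.mem_filter, Finset.mem_univ, true_and, rot] at ha ⊢
    intro j
    rw [Fin.rev_rev]
    exact ha j.rev
  · intro a _; exact Fin.rev_rev a
  · intro a _; exact Fin.rev_rev a

lemma zeroRows_le {n : ℕ} (M : Fin n → Fin n → Bool) : PP.zeroRows M ≤ n := by
  simpa [PP.zeroRows] using Finset.card_filter_le Finset.univ (fun i : Fin n => ∀ j, M i j = false)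

lemma card_ones {n : ℕ} {M : Fin n → Fin n → Bool} (h : PP.isPP M) :
    (Finset.univ.filter (fun p : Fin n × Fin n => M p.1 p.2 = true)).card
      = n - PP.zeroRows M := by
  have := Finset.card_bij (s := Finset.univ.filter (fun p : Fin n × Fin n => M p.1 p.2 = true))
    (t := Finset.univ.filter (fun i : Fin n => ∃ j, M i j = true))
    (fun p _ => p.1)
    (by intro p hp
        simp only [Finset.mem_filter, Finset.mem_univ, true_and] at hp ⊢
        exact ⟨p.2, hp⟩)
    (by intro p hp q hq e
        simp only [Finset.mem_filter, Finset.mem_univ, true_and] at hp hq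
        have e' : p.1 = q.1 := e
        have := h.1 p.1 p.2 q.2 hp (by rw [e']; exact hq)
        exact Prod.ext e' this)
    (by intro i hi
        simp only [Finset.mem_filter, Finset.mem_univ, true_and] at hi
        obtain ⟨j, hj⟩ := hi
        exact ⟨(i, j), by simp [hj], rfl⟩)
  rw [this]
  have : (Finset.univ.filter (fun i : Fin n => ∃ j, M i j = true))
      = Finset.univ \ (Finset.univ.filter (fun i : Fin n => ∀ j, M i j = false)) := by
    rw [← Finset.filter_not]
    apply Finset.filter_congr
    intro i _
    simp only [not_forall]
    exact exists_congr fun j => by cases hb : M i j <;> simp [hb]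
  rw [this, Finset.card_sdiff_of_subset (Finset.filter_subset _ _)]
  simp [PP.zeroRows]

lemma wex_rot_eq {n : ℕ} (M : Fin n → Fin n → Bool) :
    PP.wexStat (rot M)
      = (Finset.univ.filter (fun p : Fin n × Fin n =>
          M p.1 p.2 = true ∧ ¬ p.1 < p.2)).card := by
  unfold PP.wexStat
  apply Finset.card_nbij' (i := fun p => (p.1.rev, p.2.rev)) (j := fun p => (p.1.rev, p.2.rev))
  · intro p hp
    simp only [Finset.mem_coe, Finset.mem_filter] at hp ⊢
    simp only [Finset.mem_coe, Finset.mem_filter, Finset.mem_univ, true_and, rot] at hp ⊢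
    exact ⟨hp.1, by simpa [Fin.rev_le_rev, not_lt] using hp.2⟩
  · intro p hp
    simp only [Finset.mem_coe, Finset.mem_filter] at hp ⊢
    simp only [Finset.mem_coe, Finset.mem_filter, Finset.mem_univ, true_and, rot, Fin.rev_rev] at hp ⊢
    exact ⟨hp.1, by simpa [not_lt, Fin.rev_le_rev] using hp.2⟩
  · intro p _; simp [Fin.rev_rev]
  · intro p _; simp [Fin.rev_rev]

theorem stmt6 (n k : ℕ) :
    Set.BijOn (rot (n := n))
      {M | PP.isPP M ∧ PP.zeroRows M = k} {M | PP.isPP M ∧ PP.zeroRows M = k} ∧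
    ∀ M : Fin n → Fin n → Bool, PP.isPP M ∧ PP.zeroRows M = k →
      PP.wexStat (rot M) = n - k - PP.excStat M := by
  have maps : ∀ M : Fin n → Fin n → Bool, PP.isPP M ∧ PP.zeroRows M = k →
      PP.isPP (rot M) ∧ PP.zeroRows (rot M) = k := by
    rintro M ⟨h1, h2⟩
    exact ⟨isPP_rot h1, by rw [zeroRows_rot, h2]⟩
  constructor
  · refine ⟨fun M hM => maps M hM, ?_, ?_⟩
    · intro M _ N _ e
      have : rot (rot M) = rot (rot N) := by rw [e]
      rwa [rot_rot, rot_rot] at this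
    · intro M hM
      exact ⟨rot M, maps M hM, rot_rot M⟩
  · rintro M ⟨h1, h2⟩
    have hsplit := Finset.card_filter_add_card_filter_not
      (s := Finset.univ.filter (fun p : Fin n × Fin n => M p.1 p.2 = true))
      (p := fun p : Fin n × Fin n => p.1 < p.2)
    rw [card_ones h1, h2] at hsplit
    have e1 : (Finset.univ.filter (fun p : Fin n × Fin n => M p.1 p.2 = true)).filter
        (fun p => p.1 < p.2) = Finset.univ.filter
        (fun p : Fin n × Fin n => M p.1 p.2 = true ∧ p.1 < p.2) := by
      rw [Finset.filter_filter]
    have e2 : (Finset.univ.filter (fun p : Fin n × Fin n => M p.1 p.2 = true)).filter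
        (fun p => ¬ p.1 < p.2) = Finset.univ.filter
        (fun p : Fin n × Fin n => M p.1 p.2 = true ∧ ¬ p.1 < p.2) := by
      rw [Finset.filter_filter]
    rw [e1, e2] at hsplit
    have hk : k ≤ n := h2 ▸ zeroRows_le M
    rw [wex_rot_eq M]
    unfold PP.excStat
    omega
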